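/- Let N ≤ N_R be positive integers and let p(t, a) = Σ_{n=0}^∞ A_n(a) Σ_{m=0}^n binom(n,m) (−1)^m t^{N+n−m−1} e^{−t}/(N+n−m−1)! for t > 0 and a ∈ ℝ. Then for every t > 0 and a ∈ ℝ, a · ∂_a p^{(1)}(t, a) = ( 2 − N_R + (2 − 2N − N_R − a + N·N_R + N·a)/t ) · p(t, a) + ( 4 − 2N − N_R − a + t + (2 + N² − 3N)/t ) · p^{(1)}(t, a) + ( 1 − N + t ) · p^{(2)}(t, a), where ∂_a denotes the partial derivative with respect to a of the function a ↦ p^{(1)}(t, a). -/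

import Mathlib

/-- Pochhammer symbol `(x)ₙ = x (x+1) ⋯ (x+n-1)`. -/
noncomputable def poch (x : ℝ) (n : ℕ) : ℝ := ∏ i ∈ Finset.range n, (x + i)

/-- `A_n(a) = ((N)_n/(N_R)_n) aⁿ/n!`. -/
noncomputable def Acoef (N NR : ℕ) (a : ℝ) (n : ℕ) : ℝ :=
  (poch N n / poch NR n) * a ^ n / (n.factorial : ℝ)

/-- The (normalized) ZF SNR density
`p(t,a) = Σ_n A_n(a) Σ_{m=0}^n C(n,m) (−1)^m t^{N+n−m−1} e^{−t}/(N+n−m−1)!`. -/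
noncomputable def pdfZF (N NR : ℕ) (t a : ℝ) : ℝ :=
  ∑' n : ℕ, Acoef N NR a n *
    ∑ m ∈ Finset.range (n + 1),
      (n.choose m : ℝ) * (-1 : ℝ) ^ m * t ^ (N + n - m - 1) * Real.exp (-t)
        / ((N + n - m - 1).factorial : ℝ)


open Finset

noncomputable def bb (k : ℕ) (t : ℝ) : ℝ := t ^ k * Real.exp (-t) / (k.factorial : ℝ)
noncomputable def ps (k : ℕ) (t : ℝ) : ℝ := if k = 0 then 0 else bb (k - 1) t
noncomputable def dps (k : ℕ) (t : ℝ) : ℝ := if k = 0 then 0 else ps (k - 1) t - bb (k - 1) t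
noncomputable def cc (n j : ℕ) : ℝ := (-1 : ℝ) ^ (n - j) * (n.choose j : ℝ)

noncomputable def SS (N n : ℕ) (t : ℝ) : ℝ :=
  ∑ j ∈ range (n + 1), cc n j * bb (N - 1 + j) t
noncomputable def SP (N n : ℕ) (t : ℝ) : ℝ :=
  ∑ j ∈ range (n + 1), cc n j * ps (N - 1 + j) t
noncomputable def GG (N n : ℕ) (t : ℝ) : ℝ :=
  ∑ j ∈ range (n + 1), cc n j * (ps (N - 1 + j) t - bb (N - 1 + j) t)
noncomputable def HH (N n : ℕ) (t : ℝ) : ℝ :=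
  ∑ j ∈ range (n + 1), cc n j * (dps (N - 1 + j) t - ps (N - 1 + j) t + bb (N - 1 + j) t)

lemma ps_succ (k : ℕ) (t : ℝ) : ps (k + 1) t = bb k t := by simp [ps]

lemma hasDerivAt_bb (k : ℕ) (t : ℝ) : HasDerivAt (bb k) (ps k t - bb k t) t := by
  have h1 : HasDerivAt (fun t : ℝ => t ^ k * Real.exp (-t))
      ((k : ℝ) * t ^ (k - 1) * Real.exp (-t) + t ^ k * (-Real.exp (-t))) t := by
    have he : HasDerivAt (fun t : ℝ => Real.exp (-t)) (-Real.exp (-t)) t := by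
      simpa [Function.comp_def] using ((Real.hasDerivAt_exp (-t)).comp t (hasDerivAt_neg t))
    simpa [mul_neg] using (hasDerivAt_pow k t).fun_mul he
  have h2 := h1.div_const (k.factorial : ℝ)
  refine h2.congr_deriv ?_
  symm
  cases k with
  | zero => simp [ps, bb]
  | succ m =>
    simp only [ps, bb, Nat.succ_ne_zero, if_false, Nat.add_sub_cancel]
    have : (m.factorial : ℝ) ≠ 0 := Nat.cast_ne_zero.2 m.factorial_ne_zero
    rw [Nat.factorial_succ]
    push_cast
    field_simp [Nat.factorial_succ]
    ring

lemma hasDerivAt_ps (k : ℕ) (t : ℝ) : HasDerivAt (ps k) (dps k t) t := by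
  cases k with
  | zero =>
    rw [show ps 0 = fun _ => (0 : ℝ) from funext fun _ => by simp [ps]]
    simpa [ps, dps] using (hasDerivAt_const t (0 : ℝ))
  | succ m =>
    have : ps (m + 1) = bb m := funext fun t => ps_succ m t
    rw [this]
    simpa [dps] using hasDerivAt_bb m t

lemma hasDerivAt_SS (N n : ℕ) (t : ℝ) : HasDerivAt (SS N n) (GG N n t) t := by
  have : HasDerivAt (fun t => ∑ j ∈ range (n + 1), cc n j * bb (N - 1 + j) t)
      (∑ j ∈ range (n + 1), cc n j * (ps (N - 1 + j) t - bb (N - 1 + j) t)) t :=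
    HasDerivAt.fun_sum fun j _ => (hasDerivAt_bb (N - 1 + j) t).const_mul (cc n j)
  exact this

lemma hasDerivAt_GG (N n : ℕ) (t : ℝ) : HasDerivAt (GG N n) (HH N n t) t := by
  have : HasDerivAt (fun t => ∑ j ∈ range (n + 1), cc n j * (ps (N - 1 + j) t - bb (N - 1 + j) t))
      (∑ j ∈ range (n + 1), cc n j * (dps (N - 1 + j) t - ps (N - 1 + j) t + bb (N - 1 + j) t)) t := by
    refine HasDerivAt.fun_sum fun j _ => ?_
    have h := ((hasDerivAt_ps (N - 1 + j) t).sub (hasDerivAt_bb (N - 1 + j) t)).const_mul (cc n j)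
    refine h.congr_deriv ?_; ring
  exact this

-- t-multiplication lemmas
lemma tbb (k : ℕ) (t : ℝ) : t * bb k t = ((k : ℝ) + 1) * bb (k + 1) t := by
  have h : ((k + 1).factorial : ℝ) = ((k : ℝ) + 1) * (k.factorial : ℝ) := by
    rw [Nat.factorial_succ]; push_cast; ring
  have hk : (k.factorial : ℝ) ≠ 0 := Nat.cast_ne_zero.2 k.factorial_ne_zero
  have hk1 : ((k : ℝ) + 1) ≠ 0 := by positivity
  simp only [bb, h, pow_succ]
  field_simp

lemma tps (k : ℕ) (t : ℝ) : t * ps k t = (k : ℝ) * bb k t := by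
  cases k with
  | zero => simp [ps]
  | succ m => rw [ps_succ, tbb]; push_cast; ring

lemma tdps (k : ℕ) (t : ℝ) :
    t * dps k t = ((k - 1 : ℕ) : ℝ) * bb (k - 1) t - (k : ℝ) * bb k t := by
  cases k with
  | zero => simp [dps]
  | succ m =>
    simp only [dps, Nat.succ_ne_zero, if_false, Nat.add_sub_cancel]
    rw [mul_sub, tps, tbb]
    push_cast; ring

-- coefficient lemmas
lemma cc_zero (n : ℕ) : cc (n + 1) 0 + cc n 0 = 0 := by
  simp [cc, pow_succ]

lemma cc_succ_succ (n i : ℕ) (h : i ≤ n) : cc (n + 1) (i + 1) + cc n (i + 1) = cc n i := by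
  rcases eq_or_lt_of_le h with rfl | hlt
  · simp [cc, Nat.choose_succ_self]
  · have h1 : n - i = n - (i + 1) + 1 := by omega
    have h2 : n + 1 - (i + 1) = n - (i + 1) + 1 := by omega
    simp only [cc, h1, h2, Nat.succ_sub_succ, Nat.choose_succ_succ n i]
    push_cast
    ring

lemma cc_r3 (n j : ℕ) (h : j ≤ n + 1) :
    cc (n + 1) j * ((j : ℝ) - ((n : ℝ) + 1)) = ((n : ℝ) + 1) * cc n j := by
  rcases eq_or_lt_of_le h with rfl | hlt
  · simp [cc, Nat.choose_succ_self]
  · have hj : j ≤ n := by omega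
    have hnat : (n + 1).choose j * (n + 1 - j) = n.choose j * (n + 1) :=
      (Nat.choose_mul_succ_eq n j).symm
    have h1 : n + 1 - j = n - j + 1 := by omega
    have hcast : ((n : ℝ) + 1) - j = ((n + 1 - j : ℕ) : ℝ) := by
      have := Nat.cast_sub (by omega : j ≤ n + 1) (R := ℝ); rw [this]; push_cast; ring
    have hc : ((n + 1).choose j : ℝ) * ((n + 1 - j : ℕ) : ℝ) = (n.choose j : ℝ) * ((n : ℝ) + 1) := by
      rw [← Nat.cast_mul, hnat]; push_cast; ring
    have hc' : ((n + 1).choose j : ℝ) * ((n - j : ℕ) + 1 : ℝ) = (n.choose j : ℝ) * ((n : ℝ) + 1) := by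
      rw [← hc, h1]; push_cast; ring
    have this2 : (j : ℝ) - ((n : ℝ) + 1) = -(((n - j : ℕ) : ℝ) + 1) := by
      rw [show ((n - j : ℕ) : ℝ) = (n : ℝ) - j from Nat.cast_sub hj]; ring
    simp only [cc, h1, Nat.succ_sub_succ, this2]
    push_cast [pow_succ]
    linear_combination ((-1 : ℝ) ^ (n - j)) * hc'

lemma cc_der (n i : ℕ) (h : i < n) :
    cc n (i + 1) * ((i : ℝ) + 1) + cc n i * ((n : ℝ) - (i : ℝ)) = 0 := by
  have hnat : n.choose (i + 1) * (i + 1) = n.choose i * (n - i) := Nat.choose_succ_right_eq n i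
  have h1 : n - i = n - (i + 1) + 1 := by omega
  have hcast : (n : ℝ) - (i : ℝ) = ((n - i : ℕ) : ℝ) := by
    rw [Nat.cast_sub (by omega : i ≤ n)]
  have hc : (n.choose (i + 1) : ℝ) * ((i : ℝ) + 1) = (n.choose i : ℝ) * ((n - i : ℕ) : ℝ) := by
    rw [← Nat.cast_mul, ← hnat]; push_cast; ring
  have hc' : (n.choose (i + 1) : ℝ) * ((i : ℝ) + 1) = (n.choose i : ℝ) * ((n - (i+1) : ℕ) + 1 : ℝ) := by
    rw [hc]
    congr 1
    rw [show ((n - (i+1) : ℕ) : ℝ) + 1 = (((n - (i+1)) + 1 : ℕ) : ℝ) by push_cast; ring, ← h1]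
  simp only [cc, hcast, h1]
  push_cast [pow_succ]
  linear_combination ((-1 : ℝ) ^ (n - (i + 1))) * hc'

-- Relation R1
lemma SP_rec (N n : ℕ) (t : ℝ) : SP N (n + 1) t + SP N n t = SS N n t := by
  have hext : SP N n t = ∑ j ∈ range (n + 2), cc n j * ps (N - 1 + j) t := by
    rw [SP, Finset.sum_range_succ (fun j => cc n j * ps (N - 1 + j) t) (n+1)]
    simp [cc, Nat.choose_succ_self]
  rw [SP, hext, ← Finset.sum_add_distrib]
  have : ∀ j ∈ range (n + 2),
      cc (n+1) j * ps (N - 1 + j) t + cc n j * ps (N - 1 + j) t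
      = (cc (n+1) j + cc n j) * ps (N - 1 + j) t := fun j _ => by ring
  rw [Finset.sum_congr rfl this, Finset.sum_range_succ' _ (n+1)]
  have h0 : (cc (n+1) 0 + cc n 0) * ps (N - 1 + 0) t = 0 := by rw [cc_zero]; ring
  rw [h0, add_zero]
  rw [SS]
  refine Finset.sum_congr rfl fun i hi => ?_
  have hi' : i ≤ n := by simpa [Nat.lt_succ_iff] using hi
  have : N - 1 + (i + 1) = (N - 1 + i) + 1 := by omega
  rw [this, ps_succ, cc_succ_succ n i hi']

lemma R1 (N n : ℕ) (t : ℝ) : GG N (n + 1) t + SS N (n + 1) t + GG N n t = 0 := by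
  have e1 : GG N (n+1) t = SP N (n+1) t - SS N (n+1) t := by
    rw [GG, SP, SS, ← Finset.sum_sub_distrib]
    exact Finset.sum_congr rfl fun j _ => by ring
  have e2 : GG N n t = SP N n t - SS N n t := by
    rw [GG, SP, SS, ← Finset.sum_sub_distrib]
    exact Finset.sum_congr rfl fun j _ => by ring
  have := SP_rec N n t
  rw [e1, e2]
  linarith

-- Relation R3
lemma R3 (N n : ℕ) (t : ℝ) :
    t * GG N (n + 1) t
      = (((N - 1 : ℕ) : ℝ) + (n : ℝ) + 1 - t) * SS N (n + 1) t + ((n : ℝ) + 1) * SS N n t := by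
  have key : ∑ j ∈ range (n + 2), cc (n+1) j * ((j : ℝ) - ((n : ℝ) + 1)) * bb (N - 1 + j) t
      = ((n : ℝ) + 1) * SS N n t := by
    have hext : ((n : ℝ) + 1) * SS N n t
        = ∑ j ∈ range (n + 2), ((n : ℝ) + 1) * (cc n j * bb (N - 1 + j) t) := by
      rw [SS, Finset.mul_sum, Finset.sum_range_succ _ (n+1)]
      simp [cc, Nat.choose_succ_self]
    rw [hext]
    refine Finset.sum_congr rfl fun j hj => ?_
    have hj' : j ≤ n + 1 := by simpa [Nat.lt_succ_iff] using hj
    linear_combination (bb (N - 1 + j) t) * cc_r3 n j hj'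
  have lhs : t * GG N (n+1) t
      = ∑ j ∈ range (n + 2), cc (n+1) j *
          (((N - 1 + j : ℕ) : ℝ) * bb (N - 1 + j) t
            - ((N - 1 + j : ℕ) + 1 : ℝ) * bb (N - 1 + j + 1) t) := by
    rw [GG, Finset.mul_sum]
    refine Finset.sum_congr rfl fun j _ => ?_
    rw [← tps, ← tbb]; ring
  have rhs2 : (((N - 1 : ℕ) : ℝ) + (n : ℝ) + 1 - t) * SS N (n + 1) t
      = ∑ j ∈ range (n + 2), cc (n+1) j *
          ((((N - 1 : ℕ) : ℝ) + (n : ℝ) + 1) * bb (N - 1 + j) t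
            - ((N - 1 + j : ℕ) + 1 : ℝ) * bb (N - 1 + j + 1) t) := by
    rw [SS, Finset.mul_sum]
    refine Finset.sum_congr rfl fun j _ => ?_
    linear_combination (-(cc (n+1) j)) * tbb (N - 1 + j) t
  rw [lhs, rhs2, ← key, ← Finset.sum_add_distrib]
  refine Finset.sum_congr rfl fun j _ => ?_
  push_cast
  ring

-- helper for R2
lemma PJ (M j : ℕ) (t : ℝ) :
    ((M + j - 1 : ℕ) : ℝ) * bb (M + j - 1) t + (1 - (M : ℝ)) * ps (M + j) t
      = (j : ℝ) * ps (M + j) t := by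
  cases j with
  | zero =>
    cases M with
    | zero => simp [ps]
    | succ m =>
      have : m + 1 + 0 - 1 = m := by omega
      simp only [Nat.add_zero, this, ps_succ]
      push_cast; ring
  | succ s =>
    have h1 : M + (s + 1) - 1 = M + s := by omega
    have h2 : M + (s + 1) = (M + s) + 1 := by omega
    rw [h1, h2, ps_succ]
    push_cast; ring

lemma key2 (M n : ℕ) (t : ℝ) :
    ∑ j ∈ range (n + 1), cc n j * ((j : ℝ) * ps (M + j) t + ((n : ℝ) - j) * bb (M + j) t) = 0 := by
  have hsplit : ∑ j ∈ range (n + 1), cc n j * ((j : ℝ) * ps (M + j) t + ((n : ℝ) - j) * bb (M + j) t)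
      = (∑ j ∈ range (n + 1), cc n j * (j : ℝ) * ps (M + j) t)
        + ∑ j ∈ range (n + 1), cc n j * ((n : ℝ) - j) * bb (M + j) t := by
    rw [← Finset.sum_add_distrib]
    exact Finset.sum_congr rfl fun j _ => by ring
  rw [hsplit]
  have hA : (∑ j ∈ range (n + 1), cc n j * (j : ℝ) * ps (M + j) t)
      = ∑ i ∈ range n, cc n (i+1) * ((i : ℝ) + 1) * bb (M + i) t := by
    rw [Finset.sum_range_succ' _ n]
    simp only [Nat.cast_zero, mul_zero, zero_mul, mul_assoc]
    rw [add_zero]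
    refine Finset.sum_congr rfl fun i _ => ?_
    have : M + (i + 1) = (M + i) + 1 := by omega
    rw [this, ps_succ]
    push_cast; ring
  have hB : (∑ j ∈ range (n + 1), cc n j * ((n : ℝ) - j) * bb (M + j) t)
      = ∑ j ∈ range n, cc n j * ((n : ℝ) - j) * bb (M + j) t := by
    rw [Finset.sum_range_succ]
    simp
  rw [hA, hB, ← Finset.sum_add_distrib]
  refine Finset.sum_eq_zero fun i hi => ?_
  have hi' : i < n := Finset.mem_range.1 hi
  linear_combination (bb (M + i) t) * cc_der n i hi'

lemma R2 (N n : ℕ) (t : ℝ) :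
    t * HH N n t + (t + 1 - ((N - 1 : ℕ) : ℝ)) * GG N n t + ((n : ℝ) + 1) * SS N n t = 0 := by
  have expand : t * HH N n t + (t + 1 - ((N - 1 : ℕ) : ℝ)) * GG N n t + ((n : ℝ) + 1) * SS N n t
      = ∑ j ∈ range (n + 1), cc n j *
          ((j : ℝ) * ps (N - 1 + j) t + ((n : ℝ) - j) * bb (N - 1 + j) t) := by
    rw [HH, GG, SS, Finset.mul_sum, Finset.mul_sum, Finset.mul_sum,
      ← Finset.sum_add_distrib, ← Finset.sum_add_distrib]
    refine Finset.sum_congr rfl fun j hj => ?_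
    have e1 : t * (cc n j * (dps (N-1+j) t - ps (N-1+j) t + bb (N-1+j) t))
        = cc n j * ((t * dps (N-1+j) t) - (t * ps (N-1+j) t) + (t * bb (N-1+j) t)) := by ring
    have e2 : (t + 1 - ((N - 1 : ℕ) : ℝ)) * (cc n j * (ps (N-1+j) t - bb (N-1+j) t))
        = cc n j * ((t * ps (N-1+j) t) - (t * bb (N-1+j) t)
            + (1 - ((N - 1 : ℕ) : ℝ)) * (ps (N-1+j) t - bb (N-1+j) t)) := by ring
    rw [e1, e2, tdps, tps, tbb]
    have hKc : ((N - 1 + j : ℕ) : ℝ) = ((N - 1 : ℕ) : ℝ) + (j : ℝ) := by push_cast; ring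
    linear_combination (cc n j) * PJ (N - 1) j t - (cc n j * bb (N - 1 + j) t) * hKc
  rw [expand, key2]

-- bounds
lemma bb_nonneg (k : ℕ) {t : ℝ} (ht : 0 ≤ t) : 0 ≤ bb k t :=
  div_nonneg (mul_nonneg (pow_nonneg ht k) (Real.exp_pos _).le) (Nat.cast_nonneg _)

lemma bb_le_one (k : ℕ) {t : ℝ} (ht : 0 ≤ t) : bb k t ≤ 1 := by
  have h1 : t ^ k / (k.factorial : ℝ) ≤ Real.exp t := by
    refine le_trans ?_ (Real.sum_le_exp_of_nonneg ht (k + 1))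
    refine Finset.single_le_sum (f := fun i => t ^ i / (i.factorial : ℝ)) ?_ ?_
    · intro i _
      positivity
    · exact Finset.self_mem_range_succ k
  have : bb k t = t ^ k / (k.factorial : ℝ) * Real.exp (-t) := by rw [bb]; ring
  rw [this]
  calc t ^ k / (k.factorial : ℝ) * Real.exp (-t) ≤ Real.exp t * Real.exp (-t) :=
        mul_le_mul_of_nonneg_right h1 (Real.exp_pos _).le
    _ = 1 := by rw [← Real.exp_add]; simp

lemma ps_nonneg (k : ℕ) {t : ℝ} (ht : 0 ≤ t) : 0 ≤ ps k t := by
  cases k with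
  | zero => simp [ps]
  | succ m => rw [ps_succ]; exact bb_nonneg m ht

lemma ps_le_one (k : ℕ) {t : ℝ} (ht : 0 ≤ t) : ps k t ≤ 1 := by
  cases k with
  | zero => simp [ps]
  | succ m => rw [ps_succ]; exact bb_le_one m ht

lemma abs_dps_le (k : ℕ) {t : ℝ} (ht : 0 ≤ t) : |dps k t| ≤ 1 := by
  cases k with
  | zero => simp [dps]
  | succ m =>
    simp only [dps, Nat.succ_ne_zero, if_false, Nat.add_sub_cancel]
    rw [abs_le]
    constructor
    · nlinarith [ps_nonneg m ht, bb_le_one m ht]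
    · nlinarith [ps_le_one m ht, bb_nonneg m ht]

lemma abs_cc (n j : ℕ) : |cc n j| = (n.choose j : ℝ) := by
  rw [cc, abs_mul, abs_pow, abs_neg, abs_one, one_pow, one_mul, Nat.abs_cast]

lemma abs_cc_sum_le (n : ℕ) (x : ℕ → ℝ) (hx : ∀ j, |x j| ≤ 3) :
    |∑ j ∈ Finset.range (n + 1), cc n j * x j| ≤ 3 * 2 ^ n := by
  calc |∑ j ∈ Finset.range (n + 1), cc n j * x j|
      ≤ ∑ j ∈ Finset.range (n + 1), |cc n j * x j| := Finset.abs_sum_le_sum_abs _ _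
    _ ≤ ∑ j ∈ Finset.range (n + 1), (n.choose j : ℝ) * 3 := by
        refine Finset.sum_le_sum fun j _ => ?_
        rw [abs_mul, abs_cc]
        exact mul_le_mul_of_nonneg_left (hx j) (Nat.cast_nonneg _)
    _ = 3 * 2 ^ n := by
        rw [← Finset.sum_mul, ← Nat.cast_sum, Nat.sum_range_choose]
        push_cast; ring

lemma abs_SS_le (N n : ℕ) {t : ℝ} (ht : 0 ≤ t) : |SS N n t| ≤ 3 * 2 ^ n := by
  refine abs_cc_sum_le n _ fun j => ?_
  rw [abs_of_nonneg (bb_nonneg _ ht)]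
  linarith [bb_le_one (N - 1 + j) ht]

lemma abs_GG_le (N n : ℕ) {t : ℝ} (ht : 0 ≤ t) : |GG N n t| ≤ 3 * 2 ^ n := by
  refine abs_cc_sum_le n _ fun j => ?_
  have h1 := ps_nonneg (N - 1 + j) ht
  have h2 := ps_le_one (N - 1 + j) ht
  have h3 := bb_nonneg (N - 1 + j) ht
  have h4 := bb_le_one (N - 1 + j) ht
  rw [abs_le]; constructor <;> nlinarith

lemma abs_HH_le (N n : ℕ) {t : ℝ} (ht : 0 ≤ t) : |HH N n t| ≤ 3 * 2 ^ n := by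
  refine abs_cc_sum_le n _ fun j => ?_
  have h0 := abs_dps_le (N - 1 + j) ht
  have h1 := ps_nonneg (N - 1 + j) ht
  have h2 := ps_le_one (N - 1 + j) ht
  have h3 := bb_nonneg (N - 1 + j) ht
  have h4 := bb_le_one (N - 1 + j) ht
  rw [abs_le] at h0 ⊢
  constructor <;> nlinarith [h0.1, h0.2]

-- poch facts
lemma poch_pos {x : ℝ} (hx : 0 < x) (n : ℕ) : 0 < poch x n :=
  Finset.prod_pos fun i _ => by positivity

lemma poch_mono {x y : ℝ} (hx : 0 < x) (hxy : x ≤ y) (n : ℕ) : poch x n ≤ poch y n :=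
  Finset.prod_le_prod (fun i _ => by positivity) fun i _ => add_le_add_left hxy _

lemma abs_Acoef_le (N NR : ℕ) (hN : 0 < N) (hNNR : N ≤ NR) (a : ℝ) (n : ℕ) :
    |Acoef N NR a n| ≤ |a| ^ n / (n.factorial : ℝ) := by
  have hNpos : (0 : ℝ) < N := by exact_mod_cast hN
  have hNRpos : (0 : ℝ) < NR := lt_of_lt_of_le hNpos (by exact_mod_cast hNNR)
  have h1 : 0 < poch (N : ℝ) n := poch_pos hNpos n
  have h2 : 0 < poch (NR : ℝ) n := poch_pos hNRpos n
  have hle : poch (N : ℝ) n ≤ poch (NR : ℝ) n := poch_mono hNpos (by exact_mod_cast hNNR) n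
  have hdiv : poch (N : ℝ) n / poch (NR : ℝ) n ≤ 1 := (div_le_one h2).2 hle
  have hdiv0 : 0 ≤ poch (N : ℝ) n / poch (NR : ℝ) n := le_of_lt (div_pos h1 h2)
  rw [Acoef, abs_div, abs_mul, abs_pow, Nat.abs_cast, abs_of_nonneg hdiv0]
  have h5 : poch (N:ℝ) n / poch (NR:ℝ) n * |a| ^ n / (n.factorial : ℝ)
      ≤ 1 * |a| ^ n / (n.factorial : ℝ) := by gcongr
  simpa using h5

-- summability
lemma nat_le_two_pow (n : ℕ) : (n : ℝ) ≤ 2 ^ n := by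
  exact_mod_cast (Nat.lt_two_pow_self (n := n)).le

lemma summable_master (C x : ℝ) : Summable (fun n : ℕ => C * x ^ n / (n.factorial : ℝ)) := by
  have := (Real.summable_pow_div_factorial x).mul_left C
  refine this.congr fun n => by ring

lemma summable_of_le_master {f : ℕ → ℝ} (C x : ℝ)
    (h : ∀ n, |f n| ≤ C * x ^ n / (n.factorial : ℝ)) : Summable f := by
  refine Summable.of_abs (Summable.of_nonneg_of_le (fun n => abs_nonneg _) h (summable_master C x))

section main
variable (N NR : ℕ)

lemma bound_ASS (hN : 0 < N) (hNNR : N ≤ NR) (a : ℝ) {t : ℝ} (ht : 0 ≤ t) (n : ℕ) :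
    |Acoef N NR a n * SS N n t| ≤ 3 * (2 * |a|) ^ n / (n.factorial : ℝ) := by
  rw [abs_mul]
  calc |Acoef N NR a n| * |SS N n t| ≤ (|a| ^ n / (n.factorial : ℝ)) * (3 * 2 ^ n) := by
        refine mul_le_mul (abs_Acoef_le N NR hN hNNR a n) (abs_SS_le N n ht) (abs_nonneg _) (by positivity)
    _ = 3 * (2 * |a|) ^ n / (n.factorial : ℝ) := by rw [mul_pow]; ring

lemma bound_AGG (hN : 0 < N) (hNNR : N ≤ NR) (a : ℝ) {t : ℝ} (ht : 0 ≤ t) (n : ℕ) :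
    |Acoef N NR a n * GG N n t| ≤ 3 * (2 * |a|) ^ n / (n.factorial : ℝ) := by
  rw [abs_mul]
  calc |Acoef N NR a n| * |GG N n t| ≤ (|a| ^ n / (n.factorial : ℝ)) * (3 * 2 ^ n) := by
        refine mul_le_mul (abs_Acoef_le N NR hN hNNR a n) (abs_GG_le N n ht) (abs_nonneg _) (by positivity)
    _ = 3 * (2 * |a|) ^ n / (n.factorial : ℝ) := by rw [mul_pow]; ring

lemma bound_AHH (hN : 0 < N) (hNNR : N ≤ NR) (a : ℝ) {t : ℝ} (ht : 0 ≤ t) (n : ℕ) :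
    |Acoef N NR a n * HH N n t| ≤ 3 * (2 * |a|) ^ n / (n.factorial : ℝ) := by
  rw [abs_mul]
  calc |Acoef N NR a n| * |HH N n t| ≤ (|a| ^ n / (n.factorial : ℝ)) * (3 * 2 ^ n) := by
        refine mul_le_mul (abs_Acoef_le N NR hN hNNR a n) (abs_HH_le N n ht) (abs_nonneg _) (by positivity)
    _ = 3 * (2 * |a|) ^ n / (n.factorial : ℝ) := by rw [mul_pow]; ring

lemma summable_ASS (hN : 0 < N) (hNNR : N ≤ NR) (a : ℝ) {t : ℝ} (ht : 0 ≤ t) :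
    Summable (fun n => Acoef N NR a n * SS N n t) :=
  summable_of_le_master 3 (2 * |a|) (bound_ASS N NR hN hNNR a ht)

lemma summable_AGG (hN : 0 < N) (hNNR : N ≤ NR) (a : ℝ) {t : ℝ} (ht : 0 ≤ t) :
    Summable (fun n => Acoef N NR a n * GG N n t) :=
  summable_of_le_master 3 (2 * |a|) (bound_AGG N NR hN hNNR a ht)

lemma summable_AHH (hN : 0 < N) (hNNR : N ≤ NR) (a : ℝ) {t : ℝ} (ht : 0 ≤ t) :
    Summable (fun n => Acoef N NR a n * HH N n t) :=
  summable_of_le_master 3 (2 * |a|) (bound_AHH N NR hN hNNR a ht)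

lemma summable_nAGG (hN : 0 < N) (hNNR : N ≤ NR) (a : ℝ) {t : ℝ} (ht : 0 ≤ t) :
    Summable (fun n : ℕ => (n : ℝ) * (Acoef N NR a n * GG N n t)) := by
  refine summable_of_le_master 3 (4 * |a|) fun n => ?_
  rw [abs_mul, Nat.abs_cast]
  calc (n : ℝ) * |Acoef N NR a n * GG N n t|
      ≤ 2 ^ n * (3 * (2 * |a|) ^ n / (n.factorial : ℝ)) := by
        refine mul_le_mul (nat_le_two_pow n) (bound_AGG N NR hN hNNR a ht n) (abs_nonneg _) (by positivity)
    _ = 3 * (2 * (2 * |a|)) ^ n / (n.factorial : ℝ) := by rw [mul_pow (2:ℝ) (2 * |a|) n]; ring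
    _ = 3 * (4 * |a|) ^ n / (n.factorial : ℝ) := by rw [show (2:ℝ) * (2 * |a|) = 4 * |a| by ring]

-- link with pdfZF
lemma inner_eq (hN : 0 < N) (n : ℕ) (t : ℝ) :
    (∑ m ∈ Finset.range (n + 1),
      (n.choose m : ℝ) * (-1 : ℝ) ^ m * t ^ (N + n - m - 1) * Real.exp (-t)
        / ((N + n - m - 1).factorial : ℝ)) = SS N n t := by
  rw [SS, ← Finset.sum_range_reflect (fun j => cc n j * bb (N - 1 + j) t) (n + 1)]
  refine Finset.sum_congr rfl fun m hm => ?_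
  have hm' : m ≤ n := by simpa [Nat.lt_succ_iff] using hm
  have h1 : n + 1 - 1 - m = n - m := by omega
  have h2 : N - 1 + (n - m) = N + n - m - 1 := by omega
  have h3 : n - (n - m) = m := by omega
  rw [h1, cc, bb, h2, h3, Nat.choose_symm hm']
  ring

lemma pdf_eq (hN : 0 < N) (t a : ℝ) :
    pdfZF N NR t a = ∑' n, Acoef N NR a n * SS N n t := by
  rw [pdfZF]
  exact tsum_congr fun n => by rw [inner_eq N hN n t]

-- derivative in t
lemma hasDerivAt_sum1 (hN : 0 < N) (hNNR : N ≤ NR) (a : ℝ) {t : ℝ} (ht : t ∈ Set.Ioi (0 : ℝ)) :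
    HasDerivAt (fun t' => ∑' n, Acoef N NR a n * SS N n t')
      (∑' n, Acoef N NR a n * GG N n t) t := by
  refine hasDerivAt_tsum_of_isPreconnected (summable_master 3 (2 * |a|)) isOpen_Ioi
    isPreconnected_Ioi (fun n y _ => (hasDerivAt_SS N n y).const_mul _)
    (fun n y hy => ?_) ht (summable_ASS N NR hN hNNR a (le_of_lt ht)) ht
  rw [Real.norm_eq_abs]
  exact bound_AGG N NR hN hNNR a (le_of_lt hy) n

lemma hasDerivAt_sum2 (hN : 0 < N) (hNNR : N ≤ NR) (a : ℝ) {t : ℝ} (ht : t ∈ Set.Ioi (0 : ℝ)) :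
    HasDerivAt (fun t' => ∑' n, Acoef N NR a n * GG N n t')
      (∑' n, Acoef N NR a n * HH N n t) t := by
  refine hasDerivAt_tsum_of_isPreconnected (summable_master 3 (2 * |a|)) isOpen_Ioi
    isPreconnected_Ioi (fun n y _ => (hasDerivAt_GG N n y).const_mul _)
    (fun n y hy => ?_) ht (summable_AGG N NR hN hNNR a (le_of_lt ht)) ht
  rw [Real.norm_eq_abs]
  exact bound_AHH N NR hN hNNR a (le_of_lt hy) n

lemma deriv1 (hN : 0 < N) (hNNR : N ≤ NR) (a : ℝ) {t : ℝ} (ht : 0 < t) :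
    deriv (fun t' => pdfZF N NR t' a) t = ∑' n, Acoef N NR a n * GG N n t := by
  have hfun : (fun t' => pdfZF N NR t' a) = fun t' => ∑' n, Acoef N NR a n * SS N n t' :=
    funext fun t' => pdf_eq N NR hN t' a
  rw [hfun]
  exact (hasDerivAt_sum1 N NR hN hNNR a ht).deriv

lemma deriv2 (hN : 0 < N) (hNNR : N ≤ NR) (a : ℝ) {t : ℝ} (ht : 0 < t) :
    deriv (fun t' => deriv (fun t'' => pdfZF N NR t'' a) t') t
      = ∑' n, Acoef N NR a n * HH N n t := by
  have hev : (fun t' => deriv (fun t'' => pdfZF N NR t'' a) t')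
      =ᶠ[nhds t] fun t' => ∑' n, Acoef N NR a n * GG N n t' := by
    filter_upwards [isOpen_Ioi.mem_nhds ht] with y hy
    exact deriv1 N NR hN hNNR a hy
  rw [Filter.EventuallyEq.deriv_eq hev]
  exact (hasDerivAt_sum2 N NR hN hNNR a ht).deriv

-- derivative in a
noncomputable def Acoef' (n : ℕ) (a : ℝ) : ℝ :=
  (poch N n / poch NR n) * ((n : ℝ) * a ^ (n - 1)) / (n.factorial : ℝ)

lemma hasDerivAt_Acoef (n : ℕ) (a : ℝ) :
    HasDerivAt (fun a' => Acoef N NR a' n) (Acoef' N NR n a) a := by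
  have h := ((hasDerivAt_pow n a).const_mul (poch (N : ℝ) n / poch (NR : ℝ) n)).div_const
    (n.factorial : ℝ)
  exact h

set_option maxHeartbeats 1000000 in
lemma derivA (hN : 0 < N) (hNNR : N ≤ NR) (a : ℝ) {t : ℝ} (ht : 0 < t) :
    deriv (fun a' => deriv (fun t' => pdfZF N NR t' a') t) a
      = ∑' n, Acoef' N NR n a * GG N n t := by
  have hfun : (fun a' => deriv (fun t' => pdfZF N NR t' a') t)
      = fun a' => ∑' n, Acoef N NR a' n * GG N n t :=
    funext fun a' => deriv1 N NR hN hNNR a' ht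
  rw [hfun]
  set A1 : ℝ := |a| + 1 with hA1
  have hA1pos : (0 : ℝ) < A1 := by positivity
  have hA11 : (1 : ℝ) ≤ A1 := le_add_of_nonneg_left (abs_nonneg a)
  have hmem : a ∈ Metric.ball (0 : ℝ) A1 :=
    mem_ball_zero_iff.2 (by rw [Real.norm_eq_abs, hA1]; linarith)
  refine HasDerivAt.deriv ?_
  refine hasDerivAt_tsum_of_isPreconnected (u := fun n => 3 * (4 * A1) ^ n / (n.factorial : ℝ))
    (summable_master 3 (4 * A1)) Metric.isOpen_ball ((convex_ball (0:ℝ) A1).isPreconnected)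
    (fun n y _ => (hasDerivAt_Acoef N NR n y).mul_const _)
    (fun n y hy => ?_) hmem (summable_AGG N NR hN hNNR a ht.le) hmem
  · have hy' : |y| < A1 := by simpa [Real.norm_eq_abs] using mem_ball_zero_iff.1 hy
    rw [Real.norm_eq_abs, abs_mul]
    have habs : |Acoef' N NR n y| ≤ (n : ℝ) * A1 ^ (n - 1) / (n.factorial : ℝ) := by
      have hNpos : (0 : ℝ) < N := by exact_mod_cast hN
      have hNRpos : (0 : ℝ) < NR := lt_of_lt_of_le hNpos (by exact_mod_cast hNNR)
      have hdiv : poch (N : ℝ) n / poch (NR : ℝ) n ≤ 1 :=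
        (div_le_one (poch_pos hNRpos n)).2 (poch_mono hNpos (by exact_mod_cast hNNR) n)
      have hdiv0 : 0 ≤ poch (N : ℝ) n / poch (NR : ℝ) n :=
        le_of_lt (div_pos (poch_pos hNpos n) (poch_pos hNRpos n))
      rw [Acoef', abs_div, abs_mul, abs_mul, Nat.abs_cast, Nat.abs_cast, abs_pow,
        abs_of_nonneg hdiv0]
      have h1 : |y| ^ (n - 1) ≤ A1 ^ (n - 1) :=
        pow_le_pow_left₀ (abs_nonneg y) hy'.le _
      have h6 : poch (N:ℝ) n / poch (NR:ℝ) n * ((n : ℝ) * |y| ^ (n - 1)) / (n.factorial : ℝ)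
          ≤ 1 * ((n : ℝ) * A1 ^ (n - 1)) / (n.factorial : ℝ) := by gcongr
      simpa using h6
    calc |Acoef' N NR n y| * |GG N n t|
        ≤ ((n : ℝ) * A1 ^ (n - 1) / (n.factorial : ℝ)) * (3 * 2 ^ n) := by
          refine mul_le_mul habs (abs_GG_le N n ht.le) (abs_nonneg _) (by positivity)
      _ ≤ 3 * (4 * A1) ^ n / (n.factorial : ℝ) := by
          have h2 : A1 ^ (n - 1) ≤ A1 ^ n := pow_le_pow_right₀ hA11 (by omega)
          have h3 : (n : ℝ) * A1 ^ (n - 1) ≤ 2 ^ n * A1 ^ n :=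
            mul_le_mul (nat_le_two_pow n) h2 (by positivity) (by positivity)
          have h4 : (n : ℝ) * A1 ^ (n - 1) * 2 ^ n ≤ (4 * A1) ^ n := by
            have he : (4 * A1 : ℝ) ^ n = 2 ^ n * A1 ^ n * 2 ^ n := by
              rw [show (4 : ℝ) * A1 = 2 * A1 * 2 by ring, mul_pow, mul_pow]
            rw [he]
            exact mul_le_mul_of_nonneg_right h3 (by positivity)
          calc ((n : ℝ) * A1 ^ (n - 1) / (n.factorial : ℝ)) * (3 * 2 ^ n)
              = 3 * ((n : ℝ) * A1 ^ (n - 1) * 2 ^ n) / (n.factorial : ℝ) := by ring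
            _ ≤ 3 * (4 * A1) ^ n / (n.factorial : ℝ) := by gcongr
end main

section assembly
variable (N NR : ℕ)

lemma poch_succ (x : ℝ) (n : ℕ) : poch x (n + 1) = poch x n * (x + n) :=
  Finset.prod_range_succ _ _

lemma Acoef_shift (hN : 0 < N) (hNNR : N ≤ NR) (a : ℝ) (n : ℕ) :
    a * Acoef N NR a n
      = Acoef N NR a (n + 1) * (((n : ℝ) + 1) * ((NR : ℝ) + n) / ((N : ℝ) + n)) := by
  have hNpos : (0 : ℝ) < N := by exact_mod_cast hN
  have hNRpos : (0 : ℝ) < NR := lt_of_lt_of_le hNpos (by exact_mod_cast hNNR)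
  have h1 : poch (NR : ℝ) n ≠ 0 := ne_of_gt (poch_pos hNRpos n)
  have h2 : (N : ℝ) + n ≠ 0 := by positivity
  have h3 : (NR : ℝ) + n ≠ 0 := by positivity
  have h4 : (n.factorial : ℝ) ≠ 0 := Nat.cast_ne_zero.2 n.factorial_ne_zero
  have h5 : ((n + 1).factorial : ℝ) = ((n : ℝ) + 1) * (n.factorial : ℝ) := by
    rw [Nat.factorial_succ]; push_cast; ring
  rw [Acoef, Acoef, poch_succ, poch_succ, h5]
  field_simp
  ring

lemma a_Acoef' (a : ℝ) (n : ℕ) :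
    a * Acoef' N NR n a = (n : ℝ) * Acoef N NR a n := by
  cases n with
  | zero => simp [Acoef', Acoef]
  | succ m =>
    rw [Acoef', Acoef, Nat.add_sub_cancel]
    push_cast
    ring

lemma R30 (t : ℝ) : t * GG N 0 t = (((N - 1 : ℕ) : ℝ) - t) * SS N 0 t := by
  have hcc : cc 0 0 = 1 := by simp [cc]
  simp only [GG, SS, zero_add, Finset.range_one, Finset.sum_singleton, hcc, one_mul, Nat.add_zero]
  linear_combination tps (N - 1) t

lemma zfStarZero (hN : 0 < N) (t : ℝ) (ht : 0 < t) :
    ((2 - (NR : ℝ) + (2 - 2 * (N : ℝ) - (NR : ℝ) + (N : ℝ) * (NR : ℝ)) / t) * SS N 0 t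
      + (4 - 2 * (N : ℝ) - (NR : ℝ) + t + (2 + (N : ℝ) ^ 2 - 3 * (N : ℝ)) / t) * GG N 0 t
      + (1 - (N : ℝ) + t) * HH N 0 t) = 0 := by
  have ht' : t ≠ 0 := ne_of_gt ht
  have hM : ((N - 1 : ℕ) : ℝ) = (N : ℝ) - 1 := by rw [Nat.cast_sub hN]; norm_num
  have hR2 := R2 N 0 t
  have hR30 := R30 N t
  rw [hM] at hR2 hR30
  push_cast at hR2
  have hG0 : GG N 0 t = (((N : ℝ) - 1 - t) * SS N 0 t) / t := by
    field_simp
    linear_combination hR30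
  have hH0 : HH N 0 t = (-(t + 1 - ((N : ℝ) - 1)) * GG N 0 t - ((0 : ℝ) + 1) * SS N 0 t) / t := by
    field_simp
    linear_combination hR2
  rw [hH0, hG0]
  push_cast
  field_simp
  ring

lemma zfStarSucc (hN : 0 < N) (hNNR : N ≤ NR) (a t : ℝ) (ht : 0 < t) (n : ℕ) :
    ((n : ℝ) + 1) * (Acoef N NR a (n + 1) * GG N (n + 1) t)
      - Acoef N NR a (n + 1) *
        ((2 - (NR : ℝ) + (2 - 2 * (N : ℝ) - (NR : ℝ) + (N : ℝ) * (NR : ℝ)) / t) * SS N (n + 1) t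
          + (4 - 2 * (N : ℝ) - (NR : ℝ) + t + (2 + (N : ℝ) ^ 2 - 3 * (N : ℝ)) / t) * GG N (n + 1) t
          + (1 - (N : ℝ) + t) * HH N (n + 1) t)
      = a * (Acoef N NR a n * (((N : ℝ) - 1) / t * SS N n t - GG N n t)) := by
  have ht' : t ≠ 0 := ne_of_gt ht
  have hNpos : (0 : ℝ) < N := by exact_mod_cast hN
  have hn1 : ((n : ℝ) + 1) ≠ 0 := by positivity
  have hNn : (N : ℝ) + n ≠ 0 := by positivity
  have hM : ((N - 1 : ℕ) : ℝ) = (N : ℝ) - 1 := by rw [Nat.cast_sub hN]; norm_num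
  have hR1 := R1 N n t
  have hR2 := R2 N (n + 1) t
  have hR3 := R3 N n t
  rw [hM] at hR2 hR3
  push_cast at hR2
  have hH : HH N (n + 1) t
      = (-(t + 1 - ((N : ℝ) - 1)) * GG N (n + 1) t - ((n : ℝ) + 2) * SS N (n + 1) t) / t := by
    field_simp
    linear_combination hR2
  have hS0 : SS N n t
      = (t * GG N (n + 1) t - ((N : ℝ) - 1 + (n : ℝ) + 1 - t) * SS N (n + 1) t) / ((n : ℝ) + 1) := by
    field_simp
    linear_combination -hR3
  have hG0 : GG N n t = -GG N (n + 1) t - SS N (n + 1) t := by linarith [hR1]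
  have hsh : a * (Acoef N NR a n * (((N : ℝ) - 1) / t * SS N n t - GG N n t))
      = Acoef N NR a (n + 1) * (((n : ℝ) + 1) * ((NR : ℝ) + n) / ((N : ℝ) + n))
        * (((N : ℝ) - 1) / t * SS N n t - GG N n t) := by
    rw [← mul_assoc, Acoef_shift N NR hN hNNR a n]
  rw [hsh, hH, hS0, hG0]
  field_simp
  ring

end assembly


/-- For all `t > 0` and `a ∈ ℝ`:
`a ∂_a p⁽¹⁾(t,a) = (2 − N_R + (2 − 2N − N_R − a + N N_R + N a)/t) p(t,a)
 + (4 − 2N − N_R − a + t + (2 + N² − 3N)/t) p⁽¹⁾(t,a) + (1 − N + t) p⁽²⁾(t,a)`,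
where `p⁽¹⁾, p⁽²⁾` are partial derivatives with respect to `t`. -/
theorem stmt12 (N NR : ℕ) (hN : 0 < N) (hNNR : N ≤ NR) :
    ∀ t : ℝ, 0 < t → ∀ a : ℝ,
      a * deriv (fun a' => deriv (fun t' => pdfZF N NR t' a') t) a =
        (2 - (NR : ℝ)
            + (2 - 2 * (N : ℝ) - (NR : ℝ) - a + (N : ℝ) * (NR : ℝ) + (N : ℝ) * a) / t)
            * pdfZF N NR t a
          + (4 - 2 * (N : ℝ) - (NR : ℝ) - a + t + (2 + (N : ℝ) ^ 2 - 3 * (N : ℝ)) / t)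
            * deriv (fun t' => pdfZF N NR t' a) t
          + (1 - (N : ℝ) + t) * iteratedDeriv 2 (fun t' => pdfZF N NR t' a) t := by
  
  intro t ht a
  have hS := summable_ASS N NR hN hNNR a ht.le
  have hG := summable_AGG N NR hN hNNR a ht.le
  have hH := summable_AHH N NR hN hNNR a ht.le
  have hK := summable_nAGG N NR hN hNNR a ht.le
  set C0 : ℝ := 2 - (NR:ℝ) + (2 - 2*(N:ℝ) - (NR:ℝ) + (N:ℝ)*(NR:ℝ))/t with hC0
  set C1 : ℝ := 4 - 2*(N:ℝ) - (NR:ℝ) + t + (2 + (N:ℝ)^2 - 3*(N:ℝ))/t with hC1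
  have h2' : iteratedDeriv 2 (fun t' => pdfZF N NR t' a) t
      = ∑' n, Acoef N NR a n * HH N n t := by
    rw [show iteratedDeriv 2 (fun t' => pdfZF N NR t' a)
        = deriv (fun t' => deriv (fun t'' => pdfZF N NR t'' a) t') from by
      rw [iteratedDeriv_succ, iteratedDeriv_one]]
    exact deriv2 N NR hN hNNR a ht
  rw [derivA N NR hN hNNR a ht, pdf_eq N NR hN t a, deriv1 N NR hN hNNR a ht, h2']
  have hLHS : a * ∑' n, Acoef' N NR n a * GG N n t
      = ∑' (n:ℕ), (n:ℝ) * (Acoef N NR a n * GG N n t) := by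
    rw [← tsum_mul_left]
    exact tsum_congr fun n => by rw [← mul_assoc, a_Acoef' N NR a n, mul_assoc]
  rw [hLHS]
  have hM : Summable (fun n => Acoef N NR a n *
      (C0 * SS N n t + C1 * GG N n t + (1 - (N:ℝ) + t) * HH N n t)) := by
    have := ((hS.mul_left C0).add (hG.mul_left C1)).add (hH.mul_left (1 - (N:ℝ) + t))
    exact this.congr fun n => by ring
  have hL : Summable (fun n : ℕ => (n:ℝ) * (Acoef N NR a n * GG N n t)
      - Acoef N NR a n * (C0 * SS N n t + C1 * GG N n t + (1 - (N:ℝ) + t) * HH N n t)) :=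
    hK.sub hM
  have hsplit : ∑' (n:ℕ), (n:ℝ) * (Acoef N NR a n * GG N n t)
      = (∑' (n:ℕ), ((n:ℝ) * (Acoef N NR a n * GG N n t)
          - Acoef N NR a n * (C0 * SS N n t + C1 * GG N n t + (1 - (N:ℝ) + t) * HH N n t)))
        + ∑' n, Acoef N NR a n *
            (C0 * SS N n t + C1 * GG N n t + (1 - (N:ℝ) + t) * HH N n t) := by
    rw [← Summable.tsum_add hL hM]
    exact tsum_congr fun n => by ring
  have hLeval : (∑' (n:ℕ), ((n:ℝ) * (Acoef N NR a n * GG N n t)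
        - Acoef N NR a n * (C0 * SS N n t + C1 * GG N n t + (1 - (N:ℝ) + t) * HH N n t)))
      = a * ((N:ℝ) - 1)/t * (∑' n, Acoef N NR a n * SS N n t)
        - a * ∑' n, Acoef N NR a n * GG N n t := by
    rw [hL.tsum_eq_zero_add]
    have h0 : ((0:ℕ):ℝ) * (Acoef N NR a 0 * GG N 0 t)
        - Acoef N NR a 0 * (C0 * SS N 0 t + C1 * GG N 0 t + (1 - (N:ℝ) + t) * HH N 0 t) = 0 := by
      rw [hC0, hC1, zfStarZero N NR hN t ht]
      simp
    rw [h0, zero_add]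
    have hcong : ∀ n : ℕ, (((n+1 : ℕ)):ℝ) * (Acoef N NR a (n+1) * GG N (n+1) t)
        - Acoef N NR a (n+1) *
            (C0 * SS N (n+1) t + C1 * GG N (n+1) t + (1 - (N:ℝ) + t) * HH N (n+1) t)
        = (a * ((N:ℝ) - 1)/t) * (Acoef N NR a n * SS N n t)
          - a * (Acoef N NR a n * GG N n t) := by
      intro n
      have := zfStarSucc N NR hN hNNR a t ht n
      rw [hC0, hC1]
      push_cast
      linear_combination this
    rw [tsum_congr hcong]
    rw [Summable.tsum_sub (hS.mul_left _) (hG.mul_left a), tsum_mul_left, tsum_mul_left]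
  have hMeval : ∑' n, Acoef N NR a n *
        (C0 * SS N n t + C1 * GG N n t + (1 - (N:ℝ) + t) * HH N n t)
      = C0 * (∑' n, Acoef N NR a n * SS N n t) + C1 * (∑' n, Acoef N NR a n * GG N n t)
        + (1 - (N:ℝ) + t) * (∑' n, Acoef N NR a n * HH N n t) := by
    rw [← tsum_mul_left, ← tsum_mul_left, ← tsum_mul_left,
      ← Summable.tsum_add (hS.mul_left C0) (hG.mul_left C1),
      ← Summable.tsum_add ((hS.mul_left C0).add (hG.mul_left C1)) (hH.mul_left _)]
    exact tsum_congr fun n => by ring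
  rw [hsplit, hLeval, hMeval, hC0, hC1]
  ring
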